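/- Let p be a prime, n ≥ 2, and let α = (β, 1, 1, …, 1) be the composition of length n−1 whose first part is β and whose remaining n−2 parts all equal 1. Then: (i) if β = 2, then g_α(p) = p^{n−2}; (ii) if β ≥ 3, then g_α(p) = (n−1)·p^{n−2}. -/

import Mathlib

open scoped BigOperators

/-- The number of subrings with identity of `ℤ^n` (componentwise operations)
of additive index `k`. -/
noncomputable def numSubrings (n k : ℕ) : ℕ :=
  Nat.card {S : Subring (Fin n → ℤ) // S.toAddSubgroup.index = k}

/-- The number of irreducible subrings of `ℤ^n` of index `p ^ e`: subrings of
additive index `p ^ e` all of whose elements have all coordinates congruent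
modulo `p`. -/
noncomputable def numIrrSubrings (n p e : ℕ) : ℕ :=
  Nat.card {S : Subring (Fin n → ℤ) //
    S.toAddSubgroup.index = p ^ e ∧
    ∀ x ∈ S, ∀ i j : Fin n, (p : ℤ) ∣ x i - x j}

/-- An integer matrix is in Hermite normal form if it is upper triangular and
`0 ≤ a i j < a i i` for `i < j`. -/
def IsHermiteNormalForm {n : ℕ} (A : Matrix (Fin n) (Fin n) ℤ) : Prop :=
  (∀ i j : Fin n, j < i → A i j = 0) ∧
  ∀ i j : Fin n, i < j → 0 ≤ A i j ∧ A i j < A i i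

/-- A subring matrix is a matrix in Hermite normal form such that the all-ones
vector lies in the ℤ-span of its columns and the componentwise product of any
two columns lies in the ℤ-span of its columns. -/
def IsSubringMatrix {n : ℕ} (A : Matrix (Fin n) (Fin n) ℤ) : Prop :=
  IsHermiteNormalForm A ∧
  (1 : Fin n → ℤ) ∈ Set.range A.mulVec ∧
  ∀ j k : Fin n, (fun i => A i j * A i k) ∈ Set.range A.mulVec

/-- For a composition `α` of length `m`, the number of `(m+1) × (m+1)` subring
matrices with diagonal `(p ^ α 0, …, p ^ α (m-1), 1)`, all entries of the first
`m` columns divisible by `p`, and last column `(1,…,1)ᵀ`. -/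
noncomputable def gComp (p : ℕ) {m : ℕ} (α : Fin m → ℕ) : ℕ :=
  Nat.card {A : Matrix (Fin (m + 1)) (Fin (m + 1)) ℤ //
    IsSubringMatrix A ∧
    (∀ i : Fin m, A i.castSucc i.castSucc = (p : ℤ) ^ α i) ∧
    (∀ i : Fin (m + 1), ∀ j : Fin m, (p : ℤ) ∣ A i j.castSucc) ∧
    ∀ i : Fin (m + 1), A i (Fin.last m) = 1}

set_option linter.unusedVariables false

namespace GB

def ι {N : ℕ} (j : Fin N) : Fin (N + 2) := ⟨(j : ℕ) + 1, by omega⟩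

def Mx (p β : ℕ) {N : ℕ} (x : Fin N → ℤ) : Matrix (Fin (N + 2)) (Fin (N + 2)) ℤ :=
  Matrix.of fun i j =>
    if (j : ℕ) = N + 1 then 1
    else if i = j then (if (j : ℕ) = 0 then (p : ℤ) ^ β else p)
    else if h : (i : ℕ) = 0 ∧ 0 < (j : ℕ) ∧ (j : ℕ) < N + 1 then x ⟨(j : ℕ) - 1, by omega⟩
    else 0

variable {p β N : ℕ} {x : Fin N → ℤ}

@[simp] lemma ι_val (j : Fin N) : ((ι j : Fin (N+2)) : ℕ) = (j : ℕ) + 1 := rfl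

@[simp] lemma Mx_last (i : Fin (N+2)) : Mx p β x i (Fin.last (N+1)) = 1 := by
  simp [Mx]

@[simp] lemma Mx_00 : Mx p β x 0 0 = (p : ℤ) ^ β := by
  simp [Mx]

@[simp] lemma Mx_diag_mid (j : Fin N) : Mx p β x (ι j) (ι j) = p := by
  have := j.isLt
  simp [Mx, ι]
  omega

@[simp] lemma Mx_row0_mid (j : Fin N) : Mx p β x 0 (ι j) = x j := by
  have h0 : ((0 : Fin (N+2)) : ℕ) = 0 := rfl
  have : ¬((0 : Fin (N+2)) = ι j) := by simp [Fin.ext_iff, ι]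
  simp only [Mx, Matrix.of_apply, ι_val, this, if_false]
  rw [if_neg (by omega)]; refine (dif_pos (⟨h0, by omega, by omega⟩ : ((0 : Fin (N+2)) : ℕ) = 0 ∧ 0 < (j : ℕ) + 1 ∧ (j : ℕ) + 1 < N + 1)).trans ?_
  congr 1

lemma Mx_zero {i j : Fin (N+2)} (hjl : (j : ℕ) ≠ N + 1) (hij : i ≠ j)
    (h : ¬((i : ℕ) = 0 ∧ 0 < (j : ℕ))) : Mx p β x i j = 0 := by
  have hj : (j : ℕ) < N + 1 := by omega
  simp only [Mx, Matrix.of_apply, hjl, if_false, hij, if_false]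
  rw [dif_neg (by tauto)]

lemma mulVec_Mx (c : Fin (N+2) → ℤ) (i : Fin (N+2)) :
    (Mx p β x).mulVec c i =
      if (i : ℕ) = N + 1 then c (Fin.last (N+1))
      else if (i : ℕ) = 0 then
        (p : ℤ) ^ β * c 0 + (∑ j : Fin N, x j * c (ι j)) + c (Fin.last (N+1))
      else (p : ℤ) * c i + c (Fin.last (N+1)) := by
  have hlast : ∀ k : Fin (N+1), (Fin.castSucc k : ℕ) ≠ N + 1 := by
    intro k; have := k.isLt; simp [Fin.castSucc]; omega
  rw [Matrix.mulVec, dotProduct, Fin.sum_univ_castSucc]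
  by_cases hi : (i : ℕ) = N + 1
  · have hie : i = Fin.last (N+1) := by simp [Fin.ext_iff, hi]
    rw [if_pos hi]
    subst hie
    rw [Mx_last]
    have : ∀ k : Fin (N+1), Mx p β x (Fin.last (N+1)) (Fin.castSucc k) = 0 := by
      intro k
      apply Mx_zero (hlast k)
      · intro h; apply hlast k; rw [← h]; rfl
      · rintro ⟨h, -⟩; simp at h
    simp [this]
  · rw [if_neg hi, Mx_last, one_mul]
    by_cases hi0 : (i : ℕ) = 0
    · have hie : i = 0 := by simp [Fin.ext_iff, hi0]
      subst hie
      rw [if_pos hi0]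
      congr 1
      rw [Fin.sum_univ_succ]
      have h00 : Fin.castSucc (0 : Fin (N+1)) = (0 : Fin (N+2)) := rfl
      rw [h00, Mx_00]
      congr 1
      apply Finset.sum_congr rfl
      intro j _
      have : Fin.castSucc (Fin.succ j) = ι j := by simp [Fin.ext_iff, ι]
      rw [this, Mx_row0_mid]
    · rw [if_neg hi0]
      congr 1
      have hi1 : 0 < (i : ℕ) ∧ (i : ℕ) < N + 1 := ⟨by omega, by have := i.isLt; omega⟩
      -- i is a middle index: i = ι j₀ for j₀ = i - 1
      set j₀ : Fin N := ⟨(i : ℕ) - 1, by omega⟩ with hj₀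
      have hij : i = Fin.castSucc (Fin.succ j₀) := by simp [Fin.ext_iff, hj₀]; omega
      have key : ∀ k : Fin (N+1), Mx p β x i (Fin.castSucc k) =
          if k = Fin.succ j₀ then (p : ℤ) else 0 := by
        intro k
        by_cases hk : k = Fin.succ j₀
        · subst hk
          rw [if_pos rfl, ← hij]
          have : i = ι j₀ := by simp [Fin.ext_iff, ι, hj₀]; omega
          rw [this, Mx_diag_mid]
        · rw [if_neg hk]
          apply Mx_zero (hlast k)
          · intro h; apply hk
            have : (k : ℕ) = (i : ℕ) := by simpa [Fin.ext_iff] using h.symm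
            simp [Fin.ext_iff, this]; simp only [Fin.val_succ, hj₀, Fin.val_mk]; omega
          · rintro ⟨h, -⟩; omega
      calc ∑ k : Fin (N+1), Mx p β x i (Fin.castSucc k) * c (Fin.castSucc k)
          = ∑ k : Fin (N+1), (if k = Fin.succ j₀ then (p:ℤ) else 0) * c (Fin.castSucc k) := by
            apply Finset.sum_congr rfl; intro k _; rw [key]
        _ = (p : ℤ) * c i := by
            rw [Finset.sum_eq_single (Fin.succ j₀)]
            · rw [if_pos rfl, ← hij]
            · intro b _ hb; rw [if_neg hb, zero_mul]
            · intro h; exact absurd (Finset.mem_univ _) h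

end GB

namespace GB

variable {p β N : ℕ} {x : Fin N → ℤ}

def Cond (p β : ℕ) {N : ℕ} (x : Fin N → ℤ) : Prop :=
  (∀ j, 0 ≤ x j ∧ x j < (p : ℤ) ^ β ∧ (p : ℤ) ∣ x j ∧ (p : ℤ) ^ β ∣ x j * (x j - p)) ∧
  ∀ j k, j ≠ k → (p : ℤ) ^ β ∣ x j * x k

def Pred (p β : ℕ) {N : ℕ} (A : Matrix (Fin (N + 2)) (Fin (N + 2)) ℤ) : Prop :=
  IsSubringMatrix A ∧
  (∀ i : Fin (N + 1), A i.castSucc i.castSucc = (p : ℤ) ^ (if (i : ℕ) = 0 then β else 1)) ∧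
  (∀ i : Fin (N + 2), ∀ j : Fin (N + 1), (p : ℤ) ∣ A i j.castSucc) ∧
  ∀ i : Fin (N + 2), A i (Fin.last (N + 1)) = 1

@[simp] lemma ι_ne_zero (j : Fin N) : (ι j : Fin (N + 2)) ≠ 0 := by
  simp [Fin.ext_iff, ι]

@[simp] lemma zero_ne_ι (j : Fin N) : (0 : Fin (N + 2)) ≠ ι j := fun h => ι_ne_zero j h.symm

@[simp] lemma ι_ne_last (j : Fin N) : (ι j : Fin (N + 2)) ≠ Fin.last (N + 1) := by
  have := j.isLt; simp [Fin.ext_iff, ι]; omega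

@[simp] lemma last_ne_ι (j : Fin N) : Fin.last (N + 1) ≠ (ι j : Fin (N + 2)) :=
  fun h => ι_ne_last j h.symm

@[simp] lemma ι_inj {j k : Fin N} : (ι j : Fin (N + 2)) = ι k ↔ j = k := by
  simp [Fin.ext_iff, ι]

@[simp] lemma zero_ne_last : (0 : Fin (N + 2)) ≠ Fin.last (N + 1) := by
  simp [Fin.ext_iff]

@[simp] lemma last_ne_zero : (Fin.last (N + 1) : Fin (N + 2)) ≠ 0 := by
  simp [Fin.ext_iff]

@[simp] lemma ι_val_ne (j : Fin N) : ¬ ((ι j : Fin (N + 2)) : ℕ) = N + 1 := by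
  have := j.isLt; simp [ι]; omega

@[simp] lemma ι_val_ne0 (j : Fin N) : ¬ ((ι j : Fin (N + 2)) : ℕ) = 0 := by
  simp [ι]

lemma cases3 (i : Fin (N + 2)) : i = 0 ∨ i = Fin.last (N + 1) ∨ ∃ j : Fin N, i = ι j := by
  rcases Nat.eq_zero_or_pos (i : ℕ) with h | h
  · exact Or.inl (by simp [Fin.ext_iff, h])
  · by_cases h2 : (i : ℕ) = N + 1
    · exact Or.inr (Or.inl (by simp [Fin.ext_iff, h2]))
    · have := i.isLt
      exact Or.inr (Or.inr ⟨⟨(i : ℕ) - 1, by omega⟩, by simp [Fin.ext_iff, ι]; omega⟩)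

lemma Mx_col0 {i : Fin (N + 2)} (h : i ≠ 0) : Mx p β x i 0 = 0 := by
  apply Mx_zero <;> simp [h]

lemma Mx_colmid {i : Fin (N + 2)} (j : Fin N) (h0 : i ≠ 0) (hj : i ≠ ι j) :
    Mx p β x i (ι j) = 0 := by
  apply Mx_zero (ι_val_ne j) hj
  rintro ⟨hc, -⟩
  exact h0 (by simp [Fin.ext_iff, hc])

lemma sum_ite_ι (c : Fin N → ℤ) (j : Fin N) :
    (∑ k : Fin N, x k * (if k = j then c k else 0)) = x j * c j := by
  rw [Finset.sum_eq_single j]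
  · simp
  · intro b _ hb; simp [hb]
  · intro h; exact absurd (Finset.mem_univ _) h

lemma col_mem_range (k : Fin (N + 2)) :
    (fun i => Mx p β x i k) ∈ Set.range (Mx p β x).mulVec := by
  refine ⟨fun l => if l = k then 1 else 0, funext fun i => ?_⟩
  rw [mulVec_Mx]
  rcases cases3 k with rfl | rfl | ⟨j, rfl⟩
  · rcases cases3 i with rfl | rfl | ⟨l, rfl⟩
    · simp
    · simp [Mx_col0 (last_ne_zero)]
    · simp [Mx_col0 (ι_ne_zero l)]
  · rcases cases3 i with rfl | rfl | ⟨l, rfl⟩ <;> simp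
  · rcases cases3 i with rfl | rfl | ⟨l, rfl⟩
    · simp [sum_ite_ι (fun _ => (1 : ℤ))]
    · simp [Mx_colmid j last_ne_zero (last_ne_ι j)]
    · by_cases hl : l = j
      · subst hl
        simp only [ι_ne_last, if_false, ι_val_ne, ι_val_ne0, last_ne_ι, Mx_diag_mid, ite_false, if_true, if_pos rfl]
        ring
      · simp [hl, Mx_colmid j (ι_ne_zero l) (by simp [hl])]

end GB

namespace GB

variable {p β N : ℕ} {x : Fin N → ℤ}

lemma int_p_pos (hp : p.Prime) : (0 : ℤ) < p := by exact_mod_cast hp.pos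

lemma prod_col_mem_range (hp : p.Prime) (hc : Cond p β x) (jc kc : Fin (N + 2)) :
    (fun i => Mx p β x i jc * Mx p β x i kc) ∈ Set.range (Mx p β x).mulVec := by
  have hp0 : (p : ℤ) ≠ 0 := (int_p_pos hp).ne'
  -- reduce to the case where neither is last
  rcases cases3 jc with rfl | rfl | ⟨j, rfl⟩
  · rcases cases3 kc with rfl | rfl | ⟨k, rfl⟩
    · -- (0,0)
      refine ⟨fun l => if l = 0 then (p : ℤ) ^ β else 0, funext fun i => ?_⟩
      rw [mulVec_Mx]
      rcases cases3 i with rfl | rfl | ⟨l, rfl⟩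
      · simp [sum_ite_ι (fun _ => (0:ℤ))]
      · simp [Mx_col0 (last_ne_zero)]
      · simp [Mx_col0 (ι_ne_zero l)]
    · -- (0, last)
      have := col_mem_range (p := p) (β := β) (x := x) 0
      simpa [mul_one] using this
    · -- (0, mid k)
      refine ⟨fun l => if l = 0 then x k else 0, funext fun i => ?_⟩
      rw [mulVec_Mx]
      rcases cases3 i with rfl | rfl | ⟨l, rfl⟩
      · simp
      · simp [Mx_col0 (last_ne_zero)]
      · simp [Mx_col0 (ι_ne_zero l)]
  · simpa [one_mul] using col_mem_range (p := p) (β := β) (x := x) kc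
  · rcases cases3 kc with rfl | rfl | ⟨k, rfl⟩
    · refine ⟨fun l => if l = 0 then x j else 0, funext fun i => ?_⟩
      rw [mulVec_Mx]
      rcases cases3 i with rfl | rfl | ⟨l, rfl⟩
      · simp [mul_comm]
      · simp [Mx_col0 (last_ne_zero)]
      · simp [Mx_col0 (ι_ne_zero l)]
    · simpa [mul_one] using col_mem_range (p := p) (β := β) (x := x) (ι j)
    · by_cases hjk : j = k
      · -- (mid j, mid j)
        subst hjk
        obtain ⟨t, ht⟩ := (hc.1 j).2.2.2
        refine ⟨fun l => if l = 0 then t else if l = ι j then (p : ℤ) else 0, funext fun i => ?_⟩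
        rw [mulVec_Mx]
        rcases cases3 i with rfl | rfl | ⟨l, rfl⟩
        · simp [sum_ite_ι (fun _ => (p : ℤ))]
          linear_combination -ht
        · simp [Mx_colmid j last_ne_zero (last_ne_ι j)]
        · by_cases hl : l = j
          · subst hl
            simp only [ι_ne_last, ι_val_ne, ι_val_ne0, last_ne_ι, ι_ne_zero, last_ne_zero,
              Mx_diag_mid, ite_false, if_false, if_pos rfl, if_true, eq_self_iff_true]
            ring
          · simp [hl, Mx_colmid j (ι_ne_zero l) (by simp [hl])]
      · -- (mid j, mid k), j ≠ k
        obtain ⟨t, ht⟩ := hc.2 j k hjk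
        refine ⟨fun l => if l = 0 then t else 0, funext fun i => ?_⟩
        rw [mulVec_Mx]
        rcases cases3 i with rfl | rfl | ⟨l, rfl⟩
        · simp
          linear_combination -ht
        · simp [Mx_colmid j last_ne_zero (last_ne_ι j)]
        · by_cases hl : l = j
          · subst hl
            simp [Mx_colmid k (ι_ne_zero l) (by simp [hjk])]
          · simp [hl, Mx_colmid j (ι_ne_zero l) (by simp [hl])]

end GB

namespace GB

variable {p β N : ℕ} {x : Fin N → ℤ}

lemma one_lt_pow_int (hp : p.Prime) (hβ : 1 ≤ β) : (1 : ℤ) < (p : ℤ) ^ β := by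
  have h2 : (2 : ℤ) ≤ (p : ℤ) := by exact_mod_cast hp.two_le
  exact one_lt_pow₀ (by exact_mod_cast hp.one_lt) (by omega)

lemma pred_of (hp : p.Prime) (hβ : 2 ≤ β) (hc : Cond p β x) : Pred p β (Mx p β x) := by
  have hp2 : (2 : ℤ) ≤ (p : ℤ) := by exact_mod_cast hp.two_le
  have hpow : (1 : ℤ) < (p : ℤ) ^ β := one_lt_pow_int hp (by omega)
  refine ⟨⟨⟨?_, ?_⟩, ?_, ?_⟩, ?_, ?_, ?_⟩
  · -- lower triangular zero
    intro i j hji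
    have hj : (j : ℕ) < (i : ℕ) := hji
    have hi2 : (i : ℕ) < N + 2 := i.isLt
    apply Mx_zero (by omega) (by intro h; subst h; omega)
    rintro ⟨h0, h1⟩; omega
  · -- HNF bounds
    intro i j hij
    have hij' : (i : ℕ) < (j : ℕ) := hij
    rcases cases3 j with rfl | rfl | ⟨k, rfl⟩
    · simp at hij'
    · rw [Mx_last]
      rcases cases3 i with rfl | rfl | ⟨l, rfl⟩
      · rw [Mx_00]; exact ⟨zero_le_one, hpow⟩
      · simp at hij'
      · rw [Mx_diag_mid]; constructor <;> [norm_num; linarith]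
    · rcases cases3 i with rfl | rfl | ⟨l, rfl⟩
      · rw [Mx_row0_mid, Mx_00]
        exact ⟨(hc.1 k).1, (hc.1 k).2.1⟩
      · simp [ι] at hij'; omega
      · have hlk : l ≠ k := by
          intro h; subst h; exact lt_irrefl _ hij'
        rw [Mx_colmid k (ι_ne_zero l) (by simp [hlk]), Mx_diag_mid]
        constructor <;> linarith
  · -- all-ones in range
    refine ⟨fun l => if (l : ℕ) = N + 1 then 1 else 0, funext fun i => ?_⟩
    rw [mulVec_Mx]
    have hne : ∀ jj : Fin N, ¬ ((jj : ℕ) = N) := fun jj => Nat.ne_of_lt jj.isLt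
    rcases cases3 i with rfl | rfl | ⟨l, rfl⟩ <;>
      simp [Fin.val_last, Pi.one_apply, hne]
  · exact fun jc kc => prod_col_mem_range hp hc jc kc
  · -- diagonal
    intro i
    by_cases hi : (i : ℕ) = 0
    · have : i.castSucc = (0 : Fin (N + 2)) := by simp [Fin.ext_iff, hi]
      rw [this, Mx_00, if_pos hi]
    · have hi1 : 0 < (i : ℕ) := Nat.pos_of_ne_zero hi
      have : i.castSucc = ι (⟨(i : ℕ) - 1, by have := i.isLt; omega⟩ : Fin N) := by
        simp [Fin.ext_iff, ι]; omega
      rw [this, Mx_diag_mid, if_neg hi, pow_one]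
  · -- divisibility by p in first N+1 columns
    intro i j
    have hj2 : (j.castSucc : ℕ) ≠ N + 1 := by have := j.isLt; simp; omega
    rcases cases3 (j.castSucc) with h | h | ⟨k, h⟩
    · rw [h]
      by_cases hi : i = 0
      · subst hi; rw [Mx_00]
        exact dvd_pow_self _ (by omega)
      · rw [Mx_col0 hi]; exact dvd_zero _
    · exact absurd (by rw [h]; simp) hj2
    · rw [h]
      rcases cases3 i with rfl | rfl | ⟨l, rfl⟩
      · rw [Mx_row0_mid]; exact (hc.1 k).2.2.1
      · rw [Mx_colmid k last_ne_zero (last_ne_ι k)]; exact dvd_zero _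
      · by_cases hl : l = k
        · subst hl; rw [Mx_diag_mid]
        · rw [Mx_colmid k (ι_ne_zero l) (by simp [hl])]; exact dvd_zero _
  · exact fun i => Mx_last i

end GB

namespace GB

variable {p β N : ℕ} {x : Fin N → ℤ}

lemma eq_zero_of_dvd_bound {a b : ℤ} (hb : 0 < b) (h : b ∣ a) (h0 : 0 ≤ a) (h1 : a < b) :
    a = 0 := by
  obtain ⟨t, rfl⟩ := h
  rcases lt_trichotomy t 0 with ht | rfl | ht
  · nlinarith
  · ring
  · nlinarith

lemma determine (hp : p.Prime) {A : Matrix (Fin (N + 2)) (Fin (N + 2)) ℤ} (hA : Pred p β A) :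
    A = Mx p β (fun j => A 0 (ι j)) := by
  obtain ⟨⟨⟨hlow, hup⟩, -, -⟩, hdiag, hdvd, hlast⟩ := hA
  have hp0 : (0 : ℤ) < p := int_p_pos hp
  funext i j
  rcases cases3 j with rfl | rfl | ⟨k, rfl⟩
  · -- column 0
    by_cases hi : i = 0
    · subst hi
      rw [Mx_00]
      have h0 : (0 : Fin (N + 2)) = Fin.castSucc (0 : Fin (N + 1)) := rfl
      have := hdiag 0
      simpa using this
    · rw [Mx_col0 hi, hlow i 0]
      exact lt_of_le_of_ne (Fin.zero_le i) (Ne.symm hi)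
  · rw [Mx_last]; exact hlast i
  · -- middle column k
    rcases cases3 i with rfl | rfl | ⟨l, rfl⟩
    · rw [Mx_row0_mid]
    · rw [Mx_colmid k last_ne_zero (last_ne_ι k)]
      apply hlow
      exact ι_ne_last k |>.lt_of_le (Fin.le_last _) |> fun h => h
    · by_cases hlk : l = k
      · subst hlk
        rw [Mx_diag_mid]
        have := hdiag ⟨(l : ℕ) + 1, by omega⟩
        have hcs : (⟨(l : ℕ) + 1, by omega⟩ : Fin (N + 1)).castSucc = ι l := by
          simp [Fin.ext_iff, ι]
        rw [hcs] at this
        rw [this, if_neg (by simp)]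
        exact pow_one _
      · rw [Mx_colmid k (ι_ne_zero l) (by simp [hlk])]
        rcases Nat.lt_or_ge (l : ℕ) (k : ℕ) with h | h
        · -- upper middle entry: divisible by p, in [0, p)
          have hlt : (ι l : Fin (N + 2)) < ι k := by
            rw [Fin.lt_def, ι_val, ι_val]; omega
          obtain ⟨h0, h1⟩ := hup _ _ hlt
          have hdl : A (ι l) (ι l) = (p : ℤ) := by
            have := hdiag ⟨(l : ℕ) + 1, by omega⟩
            have hcs : (⟨(l : ℕ) + 1, by omega⟩ : Fin (N + 1)).castSucc = ι l := by
              simp [Fin.ext_iff, ι]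
            rw [hcs] at this
            rw [this, if_neg (by simp), pow_one]
          rw [hdl] at h1
          have hdv : (p : ℤ) ∣ A (ι l) (ι k) := by
            have := hdvd (ι l) ⟨(k : ℕ) + 1, by omega⟩
            have hcs : (⟨(k : ℕ) + 1, by omega⟩ : Fin (N + 1)).castSucc = ι k := by
              simp [Fin.ext_iff, ι]
            rwa [hcs] at this
          exact eq_zero_of_dvd_bound hp0 hdv h0 h1
        · have hlt : (ι k : Fin (N + 2)) < ι l := by
            rw [Fin.lt_def, ι_val, ι_val]; omega
          exact hlow _ _ hlt

end GB

namespace GB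

variable {p β N : ℕ} {x : Fin N → ℤ}

lemma zero_lt_ι (j : Fin N) : (0 : Fin (N + 2)) < ι j := by
  rw [Fin.lt_def]; simp [ι]

lemma extract (hp : p.Prime) {c : Fin (N + 2) → ℤ} {v : Fin (N + 2) → ℤ}
    (hcv : (Mx p β x).mulVec c = v)
    (hvlast : v (Fin.last (N + 1)) = 0) (hvmid : ∀ l : Fin N, v (ι l) = 0) :
    (p : ℤ) ^ β * c 0 = v 0 := by
  have hp0 : (p : ℤ) ≠ 0 := (int_p_pos hp).ne'
  have elast : c (Fin.last (N + 1)) = 0 := by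
    have := congrFun hcv (Fin.last (N + 1))
    rwa [mulVec_Mx, if_pos (by simp), hvlast] at this
  have emid : ∀ l : Fin N, c (ι l) = 0 := by
    intro l
    have := congrFun hcv (ι l)
    rw [mulVec_Mx, if_neg (ι_val_ne l), if_neg (ι_val_ne0 l), elast, add_zero, hvmid l] at this
    exact (mul_eq_zero.1 this).resolve_left hp0
  have e0 := congrFun hcv 0
  rw [mulVec_Mx, if_neg (by simp), if_pos (by simp), elast, add_zero] at e0
  rw [← e0]
  have : (∑ l : Fin N, x l * c (ι l)) = 0 := by
    apply Finset.sum_eq_zero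
    intro l _
    rw [emid l, mul_zero]
  rw [this, add_zero]

lemma cond_of (hp : p.Prime) (hA : Pred p β (Mx p β x)) : Cond p β x := by
  have hp0 : (p : ℤ) ≠ 0 := (int_p_pos hp).ne'
  obtain ⟨⟨⟨hlow, hup⟩, -, hprod⟩, hdiag, hdvd, -⟩ := hA
  constructor
  · intro j
    have hb := hup 0 (ι j) (zero_lt_ι j)
    rw [Mx_row0_mid, Mx_00] at hb
    refine ⟨hb.1, hb.2, ?_, ?_⟩
    · have := hdvd 0 ⟨(j : ℕ) + 1, by omega⟩
      have hcs : (⟨(j : ℕ) + 1, by omega⟩ : Fin (N + 1)).castSucc = ι j := by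
        simp [Fin.ext_iff, ι]
      rwa [hcs, Mx_row0_mid] at this
    · obtain ⟨c, hcv⟩ := hprod (ι j) (ι j)
      -- evaluate at middle rows l ≠ j to show c (ι l) = 0, at row ι j to get c (ι j) = p
      have elast : c (Fin.last (N + 1)) = 0 := by
        have := congrFun hcv (Fin.last (N + 1))
        rw [mulVec_Mx, if_pos (by simp)] at this
        rw [this, Mx_colmid j last_ne_zero (last_ne_ι j), zero_mul]
      have emid : ∀ l : Fin N, l ≠ j → c (ι l) = 0 := by
        intro l hl
        have := congrFun hcv (ι l)
        rw [mulVec_Mx, if_neg (ι_val_ne l), if_neg (ι_val_ne0 l), elast, add_zero,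
          Mx_colmid j (ι_ne_zero l) (by simp [hl]), zero_mul] at this
        exact (mul_eq_zero.1 this).resolve_left hp0
      have ej : c (ι j) = (p : ℤ) := by
        have := congrFun hcv (ι j)
        rw [mulVec_Mx, if_neg (ι_val_ne j), if_neg (ι_val_ne0 j), elast, add_zero,
          Mx_diag_mid] at this
        exact mul_left_cancel₀ hp0 this
      have e0 := congrFun hcv 0
      rw [mulVec_Mx, if_neg (by simp), if_pos (by simp), elast, add_zero,
        Mx_row0_mid] at e0
      have hsum : (∑ l : Fin N, x l * c (ι l)) = x j * (p : ℤ) := by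
        rw [Finset.sum_eq_single j]
        · rw [ej]
        · intro b _ hb; rw [emid b hb, mul_zero]
        · intro h; exact absurd (Finset.mem_univ _) h
      rw [hsum] at e0
      exact ⟨c 0, by linarith⟩
  · intro j k hjk
    obtain ⟨c, hcv⟩ := hprod (ι j) (ι k)
    have hv : ∀ i : Fin (N + 2), i ≠ 0 → Mx p β x i (ι j) * Mx p β x i (ι k) = 0 := by
      intro i hi
      by_cases hij : i = ι j
      · subst hij
        rw [Mx_colmid k (ι_ne_zero j) (by simp [hjk]), mul_zero]
      · rw [Mx_colmid j hi hij, zero_mul]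
    have key := extract hp hcv (hv _ last_ne_zero) (fun l => hv _ (ι_ne_zero l))
    rw [Mx_row0_mid, Mx_row0_mid] at key
    exact ⟨c 0, key.symm⟩

end GB

namespace GB

variable {p β N : ℕ}

noncomputable def SA (p β : ℕ) : Finset ℤ := (Finset.Ico (0:ℤ) p).image (fun t => (p:ℤ)^(β-1) * t)
noncomputable def SB (p β : ℕ) : Finset ℤ := (Finset.Ico (0:ℤ) p).image (fun t => (p:ℤ) + (p:ℤ)^(β-1) * t)
noncomputable def S2 (p : ℕ) : Finset ℤ := (Finset.Ico (0:ℤ) p).image (fun t => (p:ℤ) * t)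

lemma card_SA (hp : p.Prime) : (SA p β).card = p := by
  have hppos : (0:ℤ) < p := int_p_pos hp
  rw [SA, Finset.card_image_of_injective _ (mul_right_injective₀ (pow_ne_zero _ hppos.ne')),
    Int.card_Ico]
  simp

lemma card_SB (hp : p.Prime) : (SB p β).card = p := by
  have hppos : (0:ℤ) < p := int_p_pos hp
  have hinj : Function.Injective (fun t : ℤ => (p:ℤ) + (p:ℤ)^(β-1) * t) := by
    intro a b h
    simp only at h
    exact mul_left_cancel₀ (pow_ne_zero (β-1) hppos.ne') (by linarith)
  rw [SB, Finset.card_image_of_injective _ hinj, Int.card_Ico]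
  simp

lemma card_S2 (hp : p.Prime) : (S2 p).card = p := by
  have hppos : (0:ℤ) < p := int_p_pos hp
  rw [S2, Finset.card_image_of_injective _ (mul_right_injective₀ hppos.ne'), Int.card_Ico]
  simp

end GB

namespace GB

variable {p β N : ℕ}

lemma mem_SA_iff {a : ℤ} : a ∈ SA p β ↔ ∃ t : ℤ, 0 ≤ t ∧ t < p ∧ a = (p:ℤ)^(β-1) * t := by
  simp [SA, Finset.mem_image, Finset.mem_Ico, and_assoc, eq_comm]

lemma mem_SB_iff {a : ℤ} : a ∈ SB p β ↔ ∃ t : ℤ, 0 ≤ t ∧ t < p ∧ a = (p:ℤ) + (p:ℤ)^(β-1) * t := by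
  simp [SB, Finset.mem_image, Finset.mem_Ico, and_assoc, eq_comm]

lemma mem_S2_iff {a : ℤ} : a ∈ S2 p ↔ ∃ t : ℤ, 0 ≤ t ∧ t < p ∧ a = (p:ℤ) * t := by
  simp [S2, Finset.mem_image, Finset.mem_Ico, and_assoc, eq_comm]

section beta3
variable (hp : p.Prime) (hβ : 3 ≤ β)
include hp hβ

lemma e_beta : (p:ℤ)^β = (p:ℤ)^(β-2) * p * p := by
  conv_lhs => rw [show β = (β-2)+2 by omega]
  rw [pow_add]; ring

lemma e_beta1 : (p:ℤ)^(β-1) = (p:ℤ)^(β-2) * p := by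
  conv_lhs => rw [show β - 1 = (β-2)+1 by omega]
  rw [pow_succ]

lemma q_ge : (p:ℤ) ≤ (p:ℤ)^(β-2) := by
  calc (p:ℤ) = (p:ℤ)^1 := (pow_one _).symm
    _ ≤ (p:ℤ)^(β-2) := pow_le_pow_right₀ (by exact_mod_cast hp.one_lt.le) (by omega)

lemma mem_SA_dvd {a : ℤ} (ha : a ∈ SA p β) : (p:ℤ) ∣ a := by
  obtain ⟨t, -, -, rfl⟩ := mem_SA_iff.1 ha
  exact ⟨(p:ℤ)^(β-2) * t, by rw [e_beta1 hp hβ]; ring⟩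

lemma mem_SB_dvd {a : ℤ} (ha : a ∈ SB p β) : (p:ℤ) ∣ a := by
  obtain ⟨t, -, -, rfl⟩ := mem_SB_iff.1 ha
  refine ⟨1 + (p:ℤ)^(β-2) * t, ?_⟩
  rw [e_beta1 hp hβ]; ring

lemma SA_SB_disj {a : ℤ} (ha : a ∈ SA p β) (hb : a ∈ SB p β) : False := by
  have hppos : (0:ℤ) < p := int_p_pos hp
  have hp2 : (2:ℤ) ≤ p := by exact_mod_cast hp.two_le
  have hq := q_ge hp hβ
  have hqpos : (0:ℤ) < (p:ℤ)^(β-2) := pow_pos hppos _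
  obtain ⟨s, hs0, hs1, rfl⟩ := mem_SA_iff.1 ha
  obtain ⟨t, ht0, ht1, het⟩ := mem_SB_iff.1 hb
  rw [e_beta1 hp hβ] at het
  -- q*p*s = p + q*p*t
  rcases le_or_gt (s - t) 0 with h | h
  · nlinarith [mul_pos hqpos hppos]
  · have h1 : (1:ℤ) ≤ s - t := h
    nlinarith [mul_pos hqpos hppos, mul_le_mul_of_nonneg_left h1 (le_of_lt (mul_pos hqpos hppos))]

lemma SA_cross {a b : ℤ} (ha : a ∈ SA p β) (hb : (p:ℤ) ∣ b) : (p:ℤ)^β ∣ a * b := by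
  obtain ⟨t, -, -, rfl⟩ := mem_SA_iff.1 ha
  obtain ⟨c, rfl⟩ := hb
  refine ⟨t * c, ?_⟩
  rw [e_beta hp hβ, e_beta1 hp hβ]; ring

lemma SB_SB_not {a b : ℤ} (ha : a ∈ SB p β) (hb : b ∈ SB p β) : ¬ (p:ℤ)^β ∣ a * b := by
  intro hd
  have hppos : (0:ℤ) < p := int_p_pos hp
  have hp2 : (2:ℤ) ≤ p := by exact_mod_cast hp.two_le
  have hq := q_ge hp hβ
  have hqpos : (0:ℤ) < (p:ℤ)^(β-2) := pow_pos hppos _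
  obtain ⟨s, hs0, hs1, rfl⟩ := mem_SB_iff.1 ha
  obtain ⟨t, ht0, ht1, rfl⟩ := mem_SB_iff.1 hb
  obtain ⟨u, hu⟩ := hd
  rw [e_beta hp hβ, e_beta1 hp hβ] at hu
  have hd2 : (p:ℤ)^(β-2) * p * p ∣ (p:ℤ) * p :=
    ⟨u - (s + t + (p:ℤ)^(β-2)*s*t), by linear_combination hu⟩
  have hle := Int.le_of_dvd (by positivity) hd2
  nlinarith [mul_pos hqpos hppos]

lemma pointwise_iff {a : ℤ} :
    (0 ≤ a ∧ a < (p:ℤ)^β ∧ (p:ℤ) ∣ a ∧ (p:ℤ)^β ∣ a * (a - p)) ↔ (a ∈ SA p β ∨ a ∈ SB p β) := by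
  have hppos : (0:ℤ) < p := int_p_pos hp
  have hp2 : (2:ℤ) ≤ p := by exact_mod_cast hp.two_le
  have hq := q_ge hp hβ
  have hqpos : (0:ℤ) < (p:ℤ)^(β-2) := pow_pos hppos _
  have hpi : Prime (p:ℤ) := Int.prime_iff_natAbs_prime.2 (by simpa using hp)
  constructor
  · rintro ⟨h0, h1, ⟨y, rfl⟩, hdd⟩
    have hy0 : 0 ≤ y := by
      by_contra hc
      push_neg at hc
      nlinarith
    have hy1 : y < (p:ℤ)^(β-2) * p := by
      rw [e_beta hp hβ] at h1
      by_contra hc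
      push_neg at hc
      nlinarith [mul_pos hqpos hppos]
    have hyy : (p:ℤ)^(β-2) ∣ y * (y - 1) := by
      obtain ⟨u, hu⟩ := hdd
      rw [e_beta hp hβ] at hu
      refine ⟨u, mul_left_cancel₀ (a := (p:ℤ)*p) (by positivity) ?_⟩
      linear_combination hu
    by_cases hpd : (p:ℤ) ∣ (y - 1)
    · have hpy : ¬ (p:ℤ) ∣ y := by
        intro hc
        have h1d : (p:ℤ) ∣ 1 := by
          have := dvd_sub hc hpd
          simpa using this
        exact hpi.not_dvd_one h1d
      have hco : IsCoprime ((p:ℤ)^(β-2)) y := (hpi.coprime_iff_not_dvd.2 hpy).pow_left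
      have hd1 : (p:ℤ)^(β-2) ∣ (y - 1) := hco.dvd_of_dvd_mul_left hyy
      obtain ⟨t, ht⟩ := hd1
      refine Or.inr (mem_SB_iff.2 ⟨t, ?_, ?_, ?_⟩)
      · nlinarith
      · nlinarith
      · rw [e_beta1 hp hβ]; linear_combination (p:ℤ) * ht
    · have hco : IsCoprime ((p:ℤ)^(β-2)) (y-1) := (hpi.coprime_iff_not_dvd.2 hpd).pow_left
      have hd1 : (p:ℤ)^(β-2) ∣ y := hco.dvd_of_dvd_mul_right hyy
      obtain ⟨t, ht⟩ := hd1
      refine Or.inl (mem_SA_iff.2 ⟨t, ?_, ?_, ?_⟩)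
      · nlinarith
      · nlinarith
      · rw [e_beta1 hp hβ]; linear_combination (p:ℤ) * ht
  · rintro (ha | ha)
    · have hdvd := mem_SA_dvd hp hβ ha
      obtain ⟨t, ht0, ht1, rfl⟩ := mem_SA_iff.1 ha
      refine ⟨?_, ?_, hdvd, ⟨t * ((p:ℤ)^(β-2)*t - 1), ?_⟩⟩
      · positivity
      · rw [e_beta hp hβ, e_beta1 hp hβ]
        nlinarith [mul_pos hqpos hppos]
      · rw [e_beta hp hβ, e_beta1 hp hβ]; ring
    · have hdvd := mem_SB_dvd hp hβ ha
      obtain ⟨t, ht0, ht1, rfl⟩ := mem_SB_iff.1 ha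
      refine ⟨?_, ?_, hdvd, ⟨t + (p:ℤ)^(β-2)*t*t, ?_⟩⟩
      · positivity
      · rw [e_beta hp hβ, e_beta1 hp hβ]
        nlinarith [mul_pos hqpos hppos, mul_le_mul_of_nonneg_left (show t ≤ (p:ℤ) - 1 by linarith)
          (le_of_lt (mul_pos hqpos hppos))]
      · rw [e_beta hp hβ, e_beta1 hp hβ]; ring

end beta3

end GB

namespace GB

variable {p β N : ℕ}

lemma cond2_iff (hp : p.Prime) (x : Fin N → ℤ) :
    Cond p 2 x ↔ ∀ j, x j ∈ S2 p := by
  have hppos : (0:ℤ) < p := int_p_pos hp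
  constructor
  · rintro ⟨h1, -⟩ j
    obtain ⟨h0, hb, ⟨t, ht⟩, -⟩ := h1 j
    refine mem_S2_iff.2 ⟨t, ?_, ?_, ht⟩
    · nlinarith
    · by_contra hc
      push_neg at hc
      rw [pow_two] at hb
      nlinarith
  · intro h
    constructor
    · intro j
      obtain ⟨t, ht0, ht1, hte⟩ := mem_S2_iff.1 (h j)
      exact ⟨by rw [hte]; positivity, by rw [hte, pow_two]; nlinarith, ⟨t, hte⟩,
        ⟨t * (t-1), by rw [hte]; ring⟩⟩
    · intro j k _
      obtain ⟨t, -, -, hte⟩ := mem_S2_iff.1 (h j)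
      obtain ⟨u, -, -, hue⟩ := mem_S2_iff.1 (h k)
      exact ⟨t * u, by rw [hte, hue]; ring⟩

noncomputable def sig (p β : ℕ) {N : ℕ} (x : Fin N → ℤ) : Option (Fin N) :=
  if h : ∃ j, x j ∈ SB p β then some h.choose else none

noncomputable def T (p β : ℕ) {N : ℕ} (s : Option (Fin N)) (j : Fin N) : Finset ℤ :=
  if s = some j then SB p β else SA p β

lemma fiber_iff (hp : p.Prime) (hβ : 3 ≤ β) (s : Option (Fin N)) (x : Fin N → ℤ) :
    (Cond p β x ∧ sig p β x = s) ↔ ∀ j, x j ∈ T p β s j := by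
  constructor
  · rintro ⟨hc, hs⟩ j
    have hmem : ∀ l, x l ∈ SA p β ∨ x l ∈ SB p β :=
      fun l => (pointwise_iff hp hβ).1 (hc.1 l)
    have huniq : ∀ l l', x l ∈ SB p β → x l' ∈ SB p β → l = l' := by
      intro l l' hl hl'
      by_contra hne
      exact SB_SB_not hp hβ hl hl' (hc.2 l l' hne)
    rcases s with _ | j0
    · -- sig = none: no SB elements
      rw [sig] at hs
      by_cases h : ∃ l, x l ∈ SB p β
      · rw [dif_pos h] at hs
        exact absurd hs (by simp)
      · rw [T, if_neg (by simp)]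
        exact (hmem j).resolve_right (fun hb => h ⟨j, hb⟩)
    · rw [sig] at hs
      by_cases h : ∃ l, x l ∈ SB p β
      · rw [dif_pos h] at hs
        have hj0 : x j0 ∈ SB p β := by
          have := h.choose_spec
          rwa [Option.some_inj.1 hs] at this
        by_cases hjj : j0 = j
        · subst hjj
          rw [T, if_pos rfl]
          exact hj0
        · rw [T, if_neg (by simpa using hjj)]
          refine (hmem j).resolve_right (fun hb => hjj (huniq j0 j hj0 hb))
      · rw [dif_neg h] at hs
        exact absurd hs (by simp)
  · intro h
    have hmem : ∀ l, x l ∈ SA p β ∨ x l ∈ SB p β := by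
      intro l
      have := h l
      rw [T] at this
      split_ifs at this with h'
      exacts [Or.inr this, Or.inl this]
    have hSA : ∀ l, s ≠ some l → x l ∈ SA p β := by
      intro l hl
      have := h l
      rwa [T, if_neg hl] at this
    have hcond : Cond p β x := by
      constructor
      · exact fun l => (pointwise_iff hp hβ).2 (hmem l)
      · intro j k hjk
        by_cases hj : s = some j
        · have hk : x k ∈ SA p β := hSA k (by rw [hj]; simpa using hjk)
          have := SA_cross hp hβ hk (by
            rcases hmem j with hj' | hj'
            exacts [mem_SA_dvd hp hβ hj', mem_SB_dvd hp hβ hj'])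
          rwa [mul_comm] at this
        · exact SA_cross hp hβ (hSA j hj) (by
            rcases hmem k with hk' | hk'
            exacts [mem_SA_dvd hp hβ hk', mem_SB_dvd hp hβ hk'])
    refine ⟨hcond, ?_⟩
    rcases s with _ | j0
    · rw [sig, dif_neg]
      rintro ⟨l, hl⟩
      exact SA_SB_disj hp hβ (hSA l (by simp)) hl
    · have hj0 : x j0 ∈ SB p β := by
        have := h j0
        rwa [T, if_pos rfl] at this
      have hex : ∃ l, x l ∈ SB p β := ⟨j0, hj0⟩
      rw [sig, dif_pos hex]
      congr 1
      by_contra hne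
      exact SA_SB_disj hp hβ (hSA _ (by simpa using fun hc => hne hc.symm)) hex.choose_spec

end GB

namespace GB

variable {p β N : ℕ}

lemma count_pointwise (Tf : Fin N → Finset ℤ) :
    Nat.card {x : Fin N → ℤ // ∀ j, x j ∈ Tf j} = ∏ j, (Tf j).card := by
  rw [Nat.card_congr (Equiv.subtypePiEquivPi), Nat.card_pi]
  exact Finset.prod_congr rfl (fun j _ => Nat.card_eq_finsetCard _)

lemma count2 (hp : p.Prime) :
    Nat.card {x : Fin N → ℤ // Cond p 2 x} = p ^ N := by
  rw [Nat.card_congr (Equiv.subtypeEquivRight (cond2_iff hp)), count_pointwise]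
  simp [card_S2 hp]

lemma count3 (hp : p.Prime) (hβ : 3 ≤ β) :
    Nat.card {x : Fin N → ℤ // Cond p β x} = (N + 1) * p ^ N := by
  have e1 : {x : Fin N → ℤ // Cond p β x} ≃
      Σ s : Option (Fin N), {x : Fin N → ℤ // ∀ j, x j ∈ T p β s j} := by
    refine (Equiv.sigmaFiberEquiv (fun w : {x : Fin N → ℤ // Cond p β x} => sig p β w.1)).symm.trans
      (Equiv.sigmaCongrRight fun s => ?_)
    exact (Equiv.subtypeSubtypeEquivSubtypeInter _ _).trans
      (Equiv.subtypeEquivRight (fiber_iff hp hβ s))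
  have e2 : ∀ s : Option (Fin N),
      Nat.card {x : Fin N → ℤ // ∀ j, x j ∈ T p β s j} = p ^ N := by
    intro s
    rw [count_pointwise]
    have : ∀ j : Fin N, (T p β s j).card = p := by
      intro j
      rw [T]
      split_ifs
      exacts [card_SB hp, card_SA hp]
    rw [Finset.prod_congr rfl (fun j _ => this j)]
    simp
  have e3 : (Σ s : Option (Fin N), {x : Fin N → ℤ // ∀ j, x j ∈ T p β s j}) ≃
      Σ s : Option (Fin N), (∀ j : Fin N, {v : ℤ // v ∈ T p β s j}) :=
    Equiv.sigmaCongrRight fun s => Equiv.subtypePiEquivPi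
  rw [Nat.card_congr (e1.trans e3), Nat.card_eq_fintype_card, Fintype.card_sigma]
  have hcard : ∀ s : Option (Fin N), Fintype.card (∀ j : Fin N, {v : ℤ // v ∈ T p β s j}) = p ^ N := by
    intro s
    rw [Fintype.card_pi]
    have : ∀ j : Fin N, Fintype.card {v : ℤ // v ∈ T p β s j} = p := by
      intro j
      rw [Fintype.card_coe, T]
      split_ifs
      exacts [card_SB hp, card_SA hp]
    rw [Finset.prod_congr rfl (fun j _ => this j)]
    simp
  rw [Finset.sum_congr rfl (fun s _ => hcard s), Finset.sum_const, Finset.card_univ,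
    Fintype.card_option, Fintype.card_fin, smul_eq_mul]

end GB

namespace GB

variable {p β N : ℕ}

lemma gComp_eq (hp : p.Prime) (hβ : 2 ≤ β) :
    gComp p (fun i : Fin (N + 1) => if (i : ℕ) = 0 then β else 1) =
      Nat.card {x : Fin N → ℤ // Cond p β x} := by
  unfold gComp
  apply Nat.card_congr
  have hiff : ∀ A : Matrix (Fin (N + 2)) (Fin (N + 2)) ℤ,
      (IsSubringMatrix A ∧
       (∀ i : Fin (N + 1), A i.castSucc i.castSucc =
          (p : ℤ) ^ (if (i : ℕ) = 0 then β else 1)) ∧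
       (∀ i : Fin (N + 2), ∀ j : Fin (N + 1), (p : ℤ) ∣ A i j.castSucc) ∧
       ∀ i : Fin (N + 2), A i (Fin.last (N + 1)) = 1) ↔ Pred p β A := fun A => Iff.rfl
  refine (Equiv.subtypeEquivRight hiff).trans ?_
  refine ⟨fun A => ⟨fun j => A.1 0 (ι j), ?_⟩,
    fun x => ⟨Mx p β x.1, pred_of hp hβ x.2⟩, fun A => ?_, fun x => ?_⟩
  · exact cond_of hp ((determine hp A.2) ▸ A.2)
  · exact Subtype.ext (determine hp A.2).symm
  · exact Subtype.ext (funext fun j => Mx_row0_mid j)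

end GB


theorem g_beta_ones (p n β : ℕ) (hp : p.Prime) (hn : 2 ≤ n) :
    (β = 2 →
      gComp p (fun i : Fin (n - 1) => if (i : ℕ) = 0 then β else 1) = p ^ (n - 2)) ∧
    (3 ≤ β →
      gComp p (fun i : Fin (n - 1) => if (i : ℕ) = 0 then β else 1) =
        (n - 1) * p ^ (n - 2)) := by
  obtain ⟨N, rfl⟩ : ∃ N, n = N + 2 := ⟨n - 2, by omega⟩
  constructor
  · rintro rfl
    show gComp p (fun i : Fin (N + 1) => if (i : ℕ) = 0 then 2 else 1) = p ^ N
    rw [GB.gComp_eq hp le_rfl, GB.count2 hp]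
  · intro hβ
    show gComp p (fun i : Fin (N + 1) => if (i : ℕ) = 0 then β else 1) = (N + 1) * p ^ N
    rw [GB.gComp_eq hp (by omega), GB.count3 hp hβ]
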